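/- Let a, T > 0, φ : ℝ → (-a,a) a homeomorphism with φ(0)=0, f continuous, c continuous with f ≥ c pointwise, M₁ < M₂ with L = max{|φ(M₁)|,|φ(M₂)|} satisfying L + 2‖c⁻‖_{L¹} < a, and assume condition (1) of Lemma 3.2 (nonvanishing integrals when min u' ≥ M₂ or max u' ≤ M₁). If u ∈ C¹ solves (φ(u'))' = λ N_f(u) + (1-λ)Q(N_f(u)), u(0)=u'(0)=u'(T), for some λ ∈ [0,1], then ‖u‖_∞ + ‖u'‖_∞ < r(2+T) where r = max{|φ⁻¹(L + 2‖c⁻‖_{L¹})|, |φ⁻¹(-(L + 2‖c⁻‖_{L¹}))|}. -/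

import Mathlib

open MeasureTheory intervalIntegral Set

theorem stmt_8 (a T : ℝ) (ha : 0 < a) (hT : 0 < T)
    (φ ψ : ℝ → ℝ) (hφc : Continuous φ) (hψc : Continuous ψ)
    (hmem : ∀ x, φ x ∈ Set.Ioo (-a) a)
    (hinv1 : ∀ x, ψ (φ x) = x)
    (hinv2 : ∀ y ∈ Set.Ioo (-a) a, φ (ψ y) = y)
    (hφ0 : φ 0 = 0)
    (f : ℝ → ℝ → ℝ → ℝ)
    (hf : Continuous fun p : ℝ × ℝ × ℝ => f p.1 p.2.1 p.2.2)
    (c : ℝ → ℝ) (hc : ContinuousOn c (Set.Icc 0 T))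
    (hfc : ∀ t ∈ Set.Icc (0:ℝ) T, ∀ x y : ℝ, c t ≤ f t x y)
    (M₁ M₂ : ℝ) (hM : M₁ < M₂)
    (L : ℝ) (hL : L = max |φ M₁| |φ M₂|)
    (hLa : L + 2 * (∫ t in (0:ℝ)..T, max (-c t) 0) < a)
    -- condition (1) of Lemma 3.2
    (h1 : ∀ v : ℝ → ℝ, ContDiff ℝ 1 v → (∀ t ∈ Set.Icc (0:ℝ) T, M₂ ≤ deriv v t) →
      (∫ t in (0:ℝ)..T, f t (v t) (deriv v t)) ≠ 0)
    (h2 : ∀ v : ℝ → ℝ, ContDiff ℝ 1 v → (∀ t ∈ Set.Icc (0:ℝ) T, deriv v t ≤ M₁) →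
      (∫ t in (0:ℝ)..T, f t (v t) (deriv v t)) ≠ 0)
    (lam : ℝ) (hlam : lam ∈ Set.Icc (0:ℝ) 1)
    (u : ℝ → ℝ) (hu : ContDiff ℝ 1 u)
    (Qv : ℝ) (hQv : Qv = (1 / T) * ∫ t in (0:ℝ)..T, f t (u t) (deriv u t))
    (heq : ∀ t ∈ Set.Icc (0:ℝ) T,
      HasDerivAt (fun s => φ (deriv u s))
        (lam * f t (u t) (deriv u t) + (1 - lam) * Qv) t)
    (hbc1 : u 0 = deriv u 0) (hbc2 : deriv u 0 = deriv u T)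
    (r : ℝ)
    (hrdef : r = max |ψ (L + 2 * ∫ t in (0:ℝ)..T, max (-c t) 0)|
                   |ψ (-(L + 2 * ∫ t in (0:ℝ)..T, max (-c t) 0))|) :
    ∀ t ∈ Set.Icc (0:ℝ) T, ∀ s ∈ Set.Icc (0:ℝ) T,
      |u t| + |deriv u s| < r * (2 + T) := by
  -- Notation
  set C : ℝ := ∫ t in (0:ℝ)..T, max (-c t) 0 with hCdef
  set F : ℝ → ℝ := fun t => f t (u t) (deriv u t) with hFdef
  set cm : ℝ → ℝ := fun t => max (-c t) 0 with hcmdef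
  have hu' : Continuous (deriv u) := hu.continuous_deriv le_rfl
  have hFc : Continuous F := by
    have : Continuous fun t : ℝ => (t, u t, deriv u t) :=
      continuous_id.prodMk (hu.continuous.prodMk hu')
    exact hf.comp this
  have hcmc : ContinuousOn cm (Set.Icc 0 T) :=
    (continuous_id.max continuous_const).comp_continuousOn hc.neg
  have hcmint : ∀ p q : ℝ, p ∈ Set.Icc (0:ℝ) T → q ∈ Set.Icc (0:ℝ) T →
      IntervalIntegrable cm volume p q := fun p q hp hq =>
    (hcmc.mono (Set.uIcc_subset_Icc hp hq)).intervalIntegrable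
  have hcint : ∀ p q : ℝ, p ∈ Set.Icc (0:ℝ) T → q ∈ Set.Icc (0:ℝ) T →
      IntervalIntegrable c volume p q := fun p q hp hq =>
    (hc.mono (Set.uIcc_subset_Icc hp hq)).intervalIntegrable
  have hcm_nonneg : ∀ t, 0 ≤ cm t := fun t => le_max_right _ _
  have hcm_ge : ∀ t ∈ Set.Icc (0:ℝ) T, -cm t ≤ F t := by
    intro t ht
    have h1 : -cm t ≤ c t := neg_le.mpr (le_max_left _ _)
    exact h1.trans (hfc t ht (u t) (deriv u t))
  have hT0 : (0:ℝ) ∈ Set.Icc (0:ℝ) T := ⟨le_refl _, hT.le⟩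
  have hTT : T ∈ Set.Icc (0:ℝ) T := ⟨hT.le, le_refl _⟩
  -- nonnegativity of pieces of C
  have hcm_piece_nonneg : ∀ p q : ℝ, p ≤ q → 0 ≤ ∫ t in p..q, cm t :=
    fun p q hpq => intervalIntegral.integral_nonneg hpq (fun t _ => hcm_nonneg t)
  have hCsplit : ∀ p q : ℝ, 0 ≤ p → p ≤ q → q ≤ T →
      (∫ t in (0:ℝ)..p, cm t) + (∫ t in p..q, cm t) + (∫ t in q..T, cm t) = C := by
    intro p q hp hpq hqT
    have hpI : p ∈ Set.Icc (0:ℝ) T := ⟨hp, hpq.trans hqT⟩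
    have hqI : q ∈ Set.Icc (0:ℝ) T := ⟨hp.trans hpq, hqT⟩
    rw [intervalIntegral.integral_add_adjacent_intervals (hcmint 0 p hT0 hpI)
        (hcmint p q hpI hqI),
      intervalIntegral.integral_add_adjacent_intervals (hcmint 0 q hT0 hqI)
        (hcmint q T hqI hTT)]
  have hC_nonneg : 0 ≤ C := hcm_piece_nonneg 0 T hT.le
  -- lower bound for integrals of F over subintervals
  have hFlow : ∀ p q : ℝ, 0 ≤ p → p ≤ q → q ≤ T →
      -(∫ t in p..q, cm t) ≤ ∫ t in p..q, F t := by
    intro p q hp hpq hqT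
    have hpI : p ∈ Set.Icc (0:ℝ) T := ⟨hp, hpq.trans hqT⟩
    have hqI : q ∈ Set.Icc (0:ℝ) T := ⟨hp.trans hpq, hqT⟩
    have := intervalIntegral.integral_mono_on hpq
      ((hcmint p q hpI hqI).neg) (hFc.intervalIntegrable p q)
      (fun t ht => hcm_ge t (Set.Icc_subset_Icc hp hqT ht))
    simpa using this
  -- The equation for g = φ ∘ u'
  set g : ℝ → ℝ := fun s => φ (deriv u s) with hgdef
  set h : ℝ → ℝ := fun t => lam * F t + (1 - lam) * Qv with hhdef
  have hhc : Continuous h := by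
    exact (continuous_const.mul hFc).add continuous_const
  have hftc : ∀ p q : ℝ, p ∈ Set.Icc (0:ℝ) T → q ∈ Set.Icc (0:ℝ) T →
      (∫ t in p..q, h t) = g q - g p := by
    intro p q hp hq
    exact intervalIntegral.integral_eq_sub_of_hasDerivAt
      (fun t ht => heq t (Set.uIcc_subset_Icc hp hq ht))
      (hhc.intervalIntegrable p q)
  -- Integrate over [0,T] : ∫ F = 0
  have hint0T : (∫ t in (0:ℝ)..T, h t) = 0 := by
    rw [hftc 0 T hT0 hTT]
    simp [hgdef, hbc2]
  have hI : (∫ t in (0:ℝ)..T, F t) = 0 := by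
    have e1 : (∫ t in (0:ℝ)..T, h t)
        = lam * (∫ t in (0:ℝ)..T, F t) + (1 - lam) * Qv * (T - 0) := by
      rw [hhdef]
      rw [intervalIntegral.integral_add ((hFc.intervalIntegrable 0 T).const_mul lam)
        (intervalIntegrable_const)]
      rw [intervalIntegral.integral_const_mul, intervalIntegral.integral_const]
      simp only [smul_eq_mul]
      ring
    rw [e1, hQv] at hint0T
    have hTne : T ≠ 0 := ne_of_gt hT
    have e2 : (1 - lam) * (1 / T * ∫ t in (0:ℝ)..T, F t) * (T - 0)
        = (1 - lam) * ∫ t in (0:ℝ)..T, F t := by field_simp; ring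
    rw [e2] at hint0T
    linarith
  have hQv0 : Qv = 0 := by rw [hQv, hI]; ring
  -- upper bound for integrals of F over subintervals, and the combined bound
  have hFbound : ∀ p q : ℝ, 0 ≤ p → p ≤ q → q ≤ T → |∫ t in p..q, F t| ≤ C := by
    intro p q hp hpq hqT
    have hpI : p ∈ Set.Icc (0:ℝ) T := ⟨hp, hpq.trans hqT⟩
    have hqI : q ∈ Set.Icc (0:ℝ) T := ⟨hp.trans hpq, hqT⟩
    have hsplitF : (∫ t in (0:ℝ)..p, F t) + (∫ t in p..q, F t) + (∫ t in q..T, F t) = 0 := by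
      rw [intervalIntegral.integral_add_adjacent_intervals (hFc.intervalIntegrable 0 p)
          (hFc.intervalIntegrable p q),
        intervalIntegral.integral_add_adjacent_intervals (hFc.intervalIntegrable 0 q)
          (hFc.intervalIntegrable q T)]
      exact hI
    have hcsplit := hCsplit p q hp hpq hqT
    have l1 := hFlow 0 p (le_refl 0) hp (hpq.trans hqT)
    have l2 := hFlow p q hp hpq hqT
    have l3 := hFlow q T (hp.trans hpq) hqT (le_refl T)
    have n2 := hcm_piece_nonneg p q hpq
    have n1 := hcm_piece_nonneg 0 p hp
    have n3 := hcm_piece_nonneg q T hqT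
    rw [abs_le]
    constructor <;> linarith
  -- find t₂ with u' t₂ < M₂ and t₁ with M₁ < u' t₁
  have ht2 : ∃ t₂ ∈ Set.Icc (0:ℝ) T, deriv u t₂ < M₂ := by
    by_contra hcon
    push_neg at hcon
    exact h1 u hu (fun t ht => hcon t ht) hI
  have ht1 : ∃ t₁ ∈ Set.Icc (0:ℝ) T, M₁ < deriv u t₁ := by
    by_contra hcon
    push_neg at hcon
    exact h2 u hu (fun t ht => hcon t ht) hI
  obtain ⟨t₂, ht₂I, ht₂⟩ := ht2
  obtain ⟨t₁, ht₁I, ht₁⟩ := ht1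
  -- find τ with M₁ ≤ u' τ ≤ M₂
  have hτex : ∃ τ ∈ Set.Icc (0:ℝ) T, M₁ ≤ deriv u τ ∧ deriv u τ ≤ M₂ := by
    by_cases hd : M₁ ≤ deriv u t₂
    · exact ⟨t₂, ht₂I, hd, ht₂.le⟩
    · push_neg at hd
      have hmem' : M₁ ∈ Set.uIcc (deriv u t₂) (deriv u t₁) := by
        rw [Set.mem_uIcc]; left; exact ⟨hd.le, ht₁.le⟩
      obtain ⟨τ, hτ, hτval⟩ := intermediate_value_uIcc (hu'.continuousOn) hmem'
      exact ⟨τ, Set.uIcc_subset_Icc ht₂I ht₁I hτ,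
        by rw [hτval], by rw [hτval]; exact hM.le⟩
  obtain ⟨τ, hτI, hτ1, hτ2⟩ := hτex
  -- monotonicity of φ
  have hφinj : Function.Injective φ := by
    intro x y hxy
    rw [← hinv1 x, ← hinv1 y, hxy]
  have hmono := hφc.strictMono_of_inj hφinj
  have hL1 : |φ M₁| ≤ L := hL ▸ le_max_left _ _
  have hL2 : |φ M₂| ≤ L := hL ▸ le_max_right _ _
  have hφle : ∀ x, M₁ ≤ x → x ≤ M₂ → |φ x| ≤ L := by
    intro x hx1 hx2
    rw [abs_le]
    rcases hmono with hm | hm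
    · constructor
      · calc -L ≤ -|φ M₁| := by linarith
          _ ≤ φ M₁ := neg_abs_le _
          _ ≤ φ x := hm.monotone hx1
      · calc φ x ≤ φ M₂ := hm.monotone hx2
          _ ≤ |φ M₂| := le_abs_self _
          _ ≤ L := hL2
    · constructor
      · calc -L ≤ -|φ M₂| := by linarith
          _ ≤ φ M₂ := neg_abs_le _
          _ ≤ φ x := hm.antitone hx2
      · calc φ x ≤ φ M₁ := hm.antitone hx1
          _ ≤ |φ M₁| := le_abs_self _
          _ ≤ L := hL1
  have hφlt : ∀ x, M₁ < x → x < M₂ → |φ x| < L := by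
    intro x hx1 hx2
    rw [abs_lt]
    rcases hmono with hm | hm
    · constructor
      · calc -L ≤ -|φ M₁| := by linarith
          _ ≤ φ M₁ := neg_abs_le _
          _ < φ x := hm hx1
      · calc φ x < φ M₂ := hm hx2
          _ ≤ |φ M₂| := le_abs_self _
          _ ≤ L := hL2
    · constructor
      · calc -L ≤ -|φ M₂| := by linarith
          _ ≤ φ M₂ := neg_abs_le _
          _ < φ x := hm hx2
      · calc φ x < φ M₁ := hm hx1
          _ ≤ |φ M₁| := le_abs_self _
          _ ≤ L := hL1
  have hL_nonneg : 0 ≤ L := (abs_nonneg _).trans hL1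
  -- g s - g τ is controlled
  have hgdiff : ∀ s ∈ Set.Icc (0:ℝ) T, |g s - g τ| ≤ C := by
    intro s hs
    have e1 : g s - g τ = ∫ t in τ..s, h t := (hftc τ s hτI hs).symm
    have e2 : (∫ t in τ..s, h t) = lam * ∫ t in τ..s, F t := by
      rw [hhdef]
      have : (fun t => lam * F t + (1 - lam) * Qv) = fun t => lam * F t := by
        funext t; rw [hQv0]; ring
      rw [this, intervalIntegral.integral_const_mul]
    have hFb : |∫ t in τ..s, F t| ≤ C := by
      rcases le_total τ s with hts | hts
      · exact hFbound τ s hτI.1 hts hs.2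
      · rw [intervalIntegral.integral_symm, abs_neg]
        exact hFbound s τ hs.1 hts hτI.2
    rw [e1, e2, abs_mul]
    calc |lam| * |∫ t in τ..s, F t| ≤ 1 * C := by
          apply mul_le_mul _ hFb (abs_nonneg _) zero_le_one
          rw [abs_of_nonneg hlam.1]; exact hlam.2
      _ = C := one_mul _
  -- Main claim : |g s| < L + 2C for all s ∈ [0,T]
  have hkey : ∀ s ∈ Set.Icc (0:ℝ) T, |g s| < L + 2 * C := by
    rcases eq_or_lt_of_le hC_nonneg with hC0 | hC0
    · -- C = 0 : g is constant, and M₁ < u' τ < M₂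
      intro s hs
      have hconst : ∀ w ∈ Set.Icc (0:ℝ) T, deriv u w = deriv u τ := by
        intro w hw
        have := hgdiff w hw
        rw [← hC0] at this
        have hgw : g w = g τ := by
          have := abs_nonpos_iff.mp this
          linarith [sub_eq_zero.mp this]
        have : ψ (g w) = ψ (g τ) := by rw [hgw]
        simpa [hgdef, hinv1] using this
      have hne2 : deriv u τ ≠ M₂ := by
        intro hh
        exact h1 u hu (fun t ht => by rw [hconst t ht, hh]) hI
      have hne1 : deriv u τ ≠ M₁ := by
        intro hh
        exact h2 u hu (fun t ht => by rw [hconst t ht, hh]) hI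
      have hgs : g s = g τ := by rw [hgdef]; simp only; rw [hconst s hs]
      have := hφlt (deriv u τ) (lt_of_le_of_ne hτ1 (Ne.symm hne1))
        (lt_of_le_of_ne hτ2 hne2)
      rw [hgs]
      calc |g τ| < L := this
        _ ≤ L + 2 * C := by linarith [hC_nonneg]
    · -- C > 0
      intro s hs
      have h1' : |g τ| ≤ L := hφle _ hτ1 hτ2
      have h2' := hgdiff s hs
      calc |g s| ≤ |g τ| + |g s - g τ| := by
            have := abs_sub_abs_le_abs_sub (g s) (g τ)
            linarith [abs_sub_comm (g s) (g τ)]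
        _ ≤ L + C := add_le_add h1' h2'
        _ < L + 2 * C := by linarith
  -- invert: |u' s| < r
  set ρ : ℝ := L + 2 * C with hρdef
  have hρa : ρ < a := hLa
  have hρ_nonneg : 0 ≤ ρ := by positivity
  have hρmem : ρ ∈ Set.Ioo (-a) a := ⟨by linarith, hρa⟩
  have hρmem' : -ρ ∈ Set.Ioo (-a) a := ⟨by linarith, by linarith⟩
  have hrρ : r = max |ψ ρ| |ψ (-ρ)| := hrdef
  have hr1 : ψ ρ ≤ r := (le_abs_self _).trans (hrρ ▸ le_max_left _ _)
  have hr2 : -r ≤ ψ (-ρ) := by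
    have : |ψ (-ρ)| ≤ r := hrρ ▸ le_max_right _ _
    linarith [neg_abs_le (ψ (-ρ))]
  have hders : ∀ s ∈ Set.Icc (0:ℝ) T, |deriv u s| < r := by
    intro s hs
    have hgs := hkey s hs
    have hgsmem : g s ∈ Set.Ioo (-a) a := hmem _
    have hgsρ : -ρ < g s ∧ g s < ρ := abs_lt.mp hgs
    have hus : deriv u s = ψ (g s) := (hinv1 _).symm
    rw [abs_lt]
    rcases hmono with hm | hm
    · have k1 : ψ (-ρ) < ψ (g s) := by
        have : φ (ψ (-ρ)) < φ (ψ (g s)) := by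
          rw [hinv2 _ hρmem', hinv2 _ hgsmem]; exact hgsρ.1
        exact hm.lt_iff_lt.mp this
      have k2 : ψ (g s) < ψ ρ := by
        have : φ (ψ (g s)) < φ (ψ ρ) := by
          rw [hinv2 _ hρmem, hinv2 _ hgsmem]; exact hgsρ.2
        exact hm.lt_iff_lt.mp this
      rw [hus]
      exact ⟨lt_of_lt_of_le' k1 hr2, lt_of_lt_of_le k2 hr1⟩
    · have k1 : ψ ρ < ψ (g s) := by
        have hlt : φ (ψ (g s)) < φ (ψ ρ) := by
          rw [hinv2 _ hρmem, hinv2 _ hgsmem]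
          exact hgsρ.2
        exact hm.lt_iff_gt.mp hlt
      have k2 : ψ (g s) < ψ (-ρ) := by
        have hlt : φ (ψ (-ρ)) < φ (ψ (g s)) := by
          rw [hinv2 _ hρmem', hinv2 _ hgsmem]
          exact hgsρ.1
        exact hm.lt_iff_gt.mp hlt
      rw [hus]
      constructor
      · have : -r ≤ ψ ρ := by
          have : |ψ ρ| ≤ r := hrρ ▸ le_max_left _ _
          linarith [neg_abs_le (ψ ρ)]
        linarith
      · have : ψ (-ρ) ≤ r := (le_abs_self _).trans (hrρ ▸ le_max_right _ _)
        linarith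
  -- maximum of |u'| on [0,T]
  obtain ⟨s₀, hs₀I, hs₀max⟩ := (isCompact_Icc (a := (0:ℝ)) (b := T)).exists_isMaxOn
    (Set.nonempty_Icc.mpr hT.le) ((hu'.abs).continuousOn)
  set m : ℝ := |deriv u s₀| with hmdef
  have hmax : ∀ s ∈ Set.Icc (0:ℝ) T, |deriv u s| ≤ m := fun s hs => hs₀max hs
  have hm_lt : m < r := hders s₀ hs₀I
  have hm_nonneg : 0 ≤ m := abs_nonneg _
  -- bound on u
  intro t ht s hs
  have hut : u t - u 0 = ∫ w in (0:ℝ)..t, deriv u w := by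
    rw [intervalIntegral.integral_deriv_eq_sub
      (fun x _ => (hu.differentiable one_ne_zero).differentiableAt)
      (hu'.intervalIntegrable 0 t)]
  have hbound : |∫ w in (0:ℝ)..t, deriv u w| ≤ m * T := by
    rw [← Real.norm_eq_abs]
    calc ‖∫ w in (0:ℝ)..t, deriv u w‖ ≤ m * |t - 0| := by
          apply intervalIntegral.norm_integral_le_of_norm_le_const
          intro x hx
          have hx' : x ∈ Set.Icc (0:ℝ) T :=
            Set.uIcc_subset_Icc hT0 ht (Set.uIoc_subset_uIcc hx)
          rw [Real.norm_eq_abs]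
          exact hmax x hx'
      _ = m * t := by rw [sub_zero, abs_of_nonneg ht.1]
      _ ≤ m * T := mul_le_mul_of_nonneg_left ht.2 hm_nonneg
  have hu0 : |u 0| ≤ m := by rw [hbc1]; exact hmax 0 hT0
  have hut' : |u t| ≤ m + m * T := by
    have : u t = u 0 + ∫ w in (0:ℝ)..t, deriv u w := by linarith [hut]
    rw [this]
    calc |u 0 + ∫ w in (0:ℝ)..t, deriv u w| ≤ |u 0| + |∫ w in (0:ℝ)..t, deriv u w| :=
          abs_add_le _ _
      _ ≤ m + m * T := add_le_add hu0 hbound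
  have hus' : |deriv u s| ≤ m := hmax s hs
  have h2T : (0:ℝ) < 2 + T := by linarith
  calc |u t| + |deriv u s| ≤ (m + m * T) + m := add_le_add hut' hus'
    _ = m * (2 + T) := by ring
    _ < r * (2 + T) := mul_lt_mul_of_pos_right hm_lt h2T
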